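/- Any set function v : Finset N → ℝ with v(∅) = 0 can be written uniquely as a linear combination of unanimity games: v = ∑_{∅ ≠ C ⊆ N} I(C) · v_C, where v_C(T) = 1 if C ⊆ T else 0 and I(C) is the Harsanyi dividend of v at C. -/

import Mathlib

open Finset

noncomputable def harsanyi {α : Type*} [DecidableEq α] (v : Finset α → ℝ) (S : Finset α) : ℝ :=
  ∑ T ∈ S.powerset, (-1 : ℝ) ^ (S.card - T.card) * v T

lemma neg_one_pow_sub' {u c : ℕ} (h : u ≤ c) : (-1:ℝ)^(c-u) = (-1)^c * (-1)^u := by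
  have h1 : (-1:ℝ)^(c-u) * (-1)^u = (-1)^c := by
    rw [← pow_add, Nat.sub_add_cancel h]
  have h2 : ((-1:ℝ)^u) * ((-1:ℝ)^u) = 1 := by
    rw [← pow_add, ← two_mul, pow_mul]; norm_num
  calc (-1:ℝ)^(c-u) = (-1:ℝ)^(c-u) * (((-1:ℝ)^u) * ((-1:ℝ)^u)) := by rw [h2, mul_one]
    _ = (-1)^c * (-1)^u := by rw [← mul_assoc, h1]

lemma sum_pow_real {α : Type*} [DecidableEq α] (S : Finset α) :
    ∑ T ∈ S.powerset, (-1:ℝ)^T.card = if S = ∅ then 1 else 0 := by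
  have := @Finset.sum_powerset_neg_one_pow_card α _ S
  have h : ((∑ m ∈ S.powerset, (-1 : ℤ) ^ m.card : ℤ) : ℝ)
      = ∑ T ∈ S.powerset, (-1:ℝ)^T.card := by push_cast; rfl
  rw [← h, this]
  split <;> norm_num

lemma sum_pow_between {α : Type*} [DecidableEq α] (S U : Finset α) (hU : U ⊆ S) :
    ∑ T ∈ S.powerset.filter (fun T => U ⊆ T), (-1:ℝ)^T.card
      = if U = S then (-1:ℝ)^S.card else 0 := by
  have key : ∑ T ∈ S.powerset.filter (fun T => U ⊆ T), (-1:ℝ)^T.card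
      = ∑ D ∈ (S \ U).powerset, (-1:ℝ)^(D ∪ U).card := by
    refine Finset.sum_nbij' (fun T => T \ U) (fun D => D ∪ U) ?_ ?_ ?_ ?_ ?_
    · intro T hT
      simp only [mem_filter, mem_powerset] at hT ⊢
      exact sdiff_subset_sdiff hT.1 Subset.rfl
    · intro D hD
      simp only [mem_filter, mem_powerset] at hD ⊢
      constructor
      · exact union_subset (hD.trans sdiff_subset) hU
      · exact subset_union_right
    · intro T hT
      simp only [mem_filter, mem_powerset] at hT
      show T \ U ∪ U = T
      exact sdiff_union_of_subset hT.2
    · intro D hD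
      simp only [mem_powerset] at hD
      show (D ∪ U) \ U = D
      rw [union_sdiff_right]
      exact sdiff_eq_self_of_disjoint (sdiff_disjoint.mono_left hD)
    · intro T hT
      simp only [mem_filter, mem_powerset] at hT
      show (-1:ℝ)^T.card = (-1:ℝ)^(T \ U ∪ U).card
      rw [sdiff_union_of_subset hT.2]
  rw [key]
  have hcard : ∀ D ∈ (S \ U).powerset, (-1:ℝ)^(D ∪ U).card = (-1:ℝ)^D.card * (-1:ℝ)^U.card := by
    intro D hD
    simp only [mem_powerset] at hD
    rw [card_union_of_disjoint (disjoint_sdiff_self_left.mono_left hD), pow_add]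
  rw [Finset.sum_congr rfl hcard, ← Finset.sum_mul, sum_pow_real]
  by_cases h : U = S
  · subst h; simp
  · have h2 : S \ U ≠ ∅ := by
      rw [Ne, sdiff_eq_empty_iff_subset]
      exact fun hs => h (Subset.antisymm hU hs)
    simp [h, h2]

/-- Möbius inversion: harsanyi of cumulative sums recovers f. -/
lemma harsanyi_sum_powerset {α : Type*} [DecidableEq α] (f : Finset α → ℝ) (S : Finset α) :
    harsanyi (fun T => ∑ C ∈ T.powerset, f C) S = f S := by
  unfold harsanyi
  simp only [Finset.mul_sum]
  rw [Finset.sum_comm' (s := S.powerset) (t := fun T => T.powerset)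
    (t' := S.powerset) (s' := fun C => S.powerset.filter (fun T => C ⊆ T))
    (f := fun T C => (-1:ℝ)^(S.card - T.card) * f C) ?_]
  · have step : ∀ C ∈ S.powerset,
        ∑ T ∈ S.powerset.filter (fun T => C ⊆ T), (-1:ℝ)^(S.card - T.card) * f C
        = (if C = S then 1 else 0) * f C := by
      intro C hC
      simp only [mem_powerset] at hC
      have : ∀ T ∈ S.powerset.filter (fun T => C ⊆ T),
          (-1:ℝ)^(S.card - T.card) * f C = (-1:ℝ)^S.card * ((-1:ℝ)^T.card * f C) := by
        intro T hT
        simp only [mem_filter, mem_powerset] at hT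
        rw [neg_one_pow_sub' (card_le_card hT.1)]; ring
      rw [Finset.sum_congr rfl this, ← Finset.mul_sum, ← Finset.sum_mul, sum_pow_between S C hC]
      by_cases h : C = S
      · subst h
        have hsq : (-1:ℝ)^C.card * (-1:ℝ)^C.card = 1 := by
          rw [← pow_add, ← two_mul, pow_mul]; norm_num
        simp only [if_pos trivial, ite_true, if_true]
        rw [← mul_assoc, hsq, one_mul]
      · simp [h]
    rw [Finset.sum_congr rfl step]
    simp only [ite_mul, one_mul, zero_mul]
    rw [Finset.sum_ite_eq' S.powerset S f]
    simp
  · intro T C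
    simp only [mem_powerset, mem_filter]
    tauto


lemma sum_powerset_harsanyi {α : Type*} [DecidableEq α] (v : Finset α → ℝ) (S : Finset α) :
    ∑ C ∈ S.powerset, harsanyi v C = v S := by
  unfold harsanyi
  rw [Finset.sum_comm' (s := S.powerset) (t := fun C => C.powerset)
    (t' := S.powerset) (s' := fun U => S.powerset.filter (fun C => U ⊆ C))
    (f := fun C U => (-1:ℝ)^(C.card - U.card) * v U) ?_]
  · have step : ∀ U ∈ S.powerset,
        ∑ C ∈ S.powerset.filter (fun C => U ⊆ C), (-1:ℝ)^(C.card - U.card) * v U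
        = (if U = S then 1 else 0) * v U := by
      intro U hU
      simp only [mem_powerset] at hU
      have : ∀ C ∈ S.powerset.filter (fun C => U ⊆ C),
          (-1:ℝ)^(C.card - U.card) * v U = (-1:ℝ)^C.card * ((-1:ℝ)^U.card * v U) := by
        intro C hCm
        simp only [mem_filter, mem_powerset] at hCm
        rw [neg_one_pow_sub' (card_le_card hCm.2)]; ring
      rw [Finset.sum_congr rfl this, ← Finset.sum_mul, sum_pow_between S U hU]
      by_cases h : U = S
      · subst h
        have hsq : (-1:ℝ)^U.card * (-1:ℝ)^U.card = 1 := by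
          rw [← pow_add, ← two_mul, pow_mul]; norm_num
        simp only [if_pos trivial, ite_true, if_true]
        rw [← mul_assoc, hsq, one_mul]
      · simp [h]
    rw [Finset.sum_congr rfl step]
    simp only [ite_mul, one_mul, zero_mul]
    rw [Finset.sum_ite_eq' S.powerset S v]
    simp
  · intro C U
    simp only [mem_powerset, mem_filter]
    tauto

theorem unanimity_basis {α : Type*} [DecidableEq α] [Fintype α]
    (v : Finset α → ℝ) (hv : v ∅ = 0) :
    (∀ T : Finset α,
      v T = ∑ C ∈ Finset.univ.powerset.filter (fun C => C ≠ ∅),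
        harsanyi v C * (if C ⊆ T then (1 : ℝ) else 0)) ∧
    (∀ c : Finset α → ℝ,
      (∀ T : Finset α,
        v T = ∑ C ∈ Finset.univ.powerset.filter (fun C => C ≠ ∅),
          c C * (if C ⊆ T then (1 : ℝ) else 0)) →
      ∀ C : Finset α, C ≠ ∅ → c C = harsanyi v C) := by
  have h0 : harsanyi v ∅ = 0 := by
    unfold harsanyi; simp [hv]
  constructor
  · intro T
    simp only [mul_ite, mul_one, mul_zero]
    rw [← Finset.sum_filter]
    have hsub : (Finset.univ.powerset.filter (fun C => C ≠ ∅)).filter (fun C => C ⊆ T)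
        ⊆ T.powerset := by
      intro C hC
      simp only [mem_filter, mem_powerset] at hC ⊢
      exact hC.2
    rw [Finset.sum_subset hsub ?_, sum_powerset_harsanyi]
    intro C hC hC2
    simp only [mem_powerset] at hC
    simp only [mem_filter, mem_powerset, subset_univ, true_and, not_and] at hC2
    have : C = ∅ := by
      by_contra h
      exact (hC2 h) hC
    rw [this, h0]
  · intro c hc C hC
    set c' : Finset α → ℝ := fun D => if D = ∅ then 0 else c D with hc'
    have hv' : ∀ T, v T = ∑ D ∈ T.powerset, c' D := by
      intro T
      rw [hc T]
      simp only [mul_ite, mul_one, mul_zero]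
      rw [← Finset.sum_filter]
      have hsub : (Finset.univ.powerset.filter (fun D => D ≠ ∅)).filter (fun D => D ⊆ T)
          ⊆ T.powerset := by
        intro D hD
        simp only [mem_filter, mem_powerset] at hD ⊢
        exact hD.2
      have hagree : ∀ D ∈ (Finset.univ.powerset.filter (fun D => D ≠ ∅)).filter (fun D => D ⊆ T),
          c D = c' D := by
        intro D hD
        simp only [mem_filter, mem_powerset] at hD
        simp [hc', hD.1.2]
      rw [Finset.sum_congr rfl hagree, Finset.sum_subset hsub ?_]
      intro D hD hD2
      simp only [mem_powerset] at hD
      simp only [mem_filter, mem_powerset, subset_univ, true_and, not_and] at hD2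
      have : D = ∅ := by
        by_contra h
        exact (hD2 h) hD
      simp [hc', this]
    have hveq : v = fun T => ∑ D ∈ T.powerset, c' D := funext hv'
    have := harsanyi_sum_powerset c' C
    rw [← hveq] at this
    rw [this]
    simp [hc', hC]
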